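/- Let a₁, a₂, a₃ be nonzero reals with a₁ + a₂ + a₃ = 0 and b₂, b₃, b₄ be nonzero reals with b₂ + b₃ + b₄ = 0. Let A be the 4×4 matrix [[a₁², −a₁a₂, −a₁a₃, 0],[−a₁a₂, a₂², −a₂a₃, 0],[−a₁a₃, −a₂a₃, a₃², 0],[0, 0, 0, 0]] and B the 4×4 matrix [[0, 0, 0, 0],[0, b₂², −b₂b₃, −b₂b₄],[0, −b₂b₃, b₃², −b₃b₄],[0, −b₂b₄, −b₃b₄, b₄²]]. Then for every t > 0, det(tA + (1/t)B) = −4a₁²b₄²(a₂a₃t + b₂b₃/t)². In particular det(tA + (1/t)B) is negative for every t > 0 with t² ≠ −b₂b₃/(a₂a₃), and t ↦ det(tA + (1/t)B) is not constant on (0,∞). -/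

import Mathlib

lemma det4aux (a b c d e f g h i j k l m n o p : ℝ) :
    (!![a,b,c,d;e,f,g,h;i,j,k,l;m,n,o,p]).det =
      a*(f*(k*p-l*o)-g*(j*p-l*n)+h*(j*o-k*n))
      - b*(e*(k*p-l*o)-g*(i*p-l*m)+h*(i*o-k*m))
      + c*(e*(j*p-l*n)-f*(i*p-l*m)+h*(i*n-j*m))
      - d*(e*(j*o-k*n)-f*(i*o-k*m)+g*(i*n-j*m)) := by
  simp [Matrix.det_succ_row_zero, Fin.sum_univ_succ, Matrix.det_fin_three,
    show Fin.succAbove (2:Fin 4) 2 = 3 from rfl, show Fin.succAbove (1:Fin 4) 2 = 3 from rfl,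
    show Fin.castSucc (2:Fin 3) = 2 from rfl, show Fin.succAbove (3:Fin 4) 2 = 2 from rfl]
  ring

set_option maxHeartbeats 1000000 in
theorem stmt7 (a₁ a₂ a₃ b₂ b₃ b₄ : ℝ)
    (ha₁ : a₁ ≠ 0) (ha₂ : a₂ ≠ 0) (ha₃ : a₃ ≠ 0) (hasum : a₁ + a₂ + a₃ = 0)
    (hb₂ : b₂ ≠ 0) (hb₃ : b₃ ≠ 0) (hb₄ : b₄ ≠ 0) (hbsum : b₂ + b₃ + b₄ = 0)
    (A B : Matrix (Fin 4) (Fin 4) ℝ)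
    (hA : A = !![a₁ ^ 2, -(a₁ * a₂), -(a₁ * a₃), 0;
                 -(a₁ * a₂), a₂ ^ 2, -(a₂ * a₃), 0;
                 -(a₁ * a₃), -(a₂ * a₃), a₃ ^ 2, 0;
                 0, 0, 0, 0])
    (hB : B = !![0, 0, 0, 0;
                 0, b₂ ^ 2, -(b₂ * b₃), -(b₂ * b₄);
                 0, -(b₂ * b₃), b₃ ^ 2, -(b₃ * b₄);
                 0, -(b₂ * b₄), -(b₃ * b₄), b₄ ^ 2]) :
    (∀ t : ℝ, 0 < t →
      (t • A + t⁻¹ • B).det =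
        -4 * a₁ ^ 2 * b₄ ^ 2 * (a₂ * a₃ * t + b₂ * b₃ / t) ^ 2) ∧
    (∀ t : ℝ, 0 < t → t ^ 2 ≠ -(b₂ * b₃) / (a₂ * a₃) →
      (t • A + t⁻¹ • B).det < 0) ∧
    (∃ s t : ℝ, 0 < s ∧ 0 < t ∧
      (s • A + s⁻¹ • B).det ≠ (t • A + t⁻¹ • B).det) := by
  have key : ∀ t : ℝ, 0 < t →
      (t • A + t⁻¹ • B).det =
        -4 * a₁ ^ 2 * b₄ ^ 2 * (a₂ * a₃ * t + b₂ * b₃ / t) ^ 2 := by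
    intro t ht
    have ht0 : t ≠ 0 := ne_of_gt ht
    have hM : t • A + t⁻¹ • B =
        !![t * a₁ ^ 2, t * (-(a₁ * a₂)), t * (-(a₁ * a₃)), 0;
           t * (-(a₁ * a₂)), t * a₂ ^ 2 + t⁻¹ * b₂ ^ 2,
             t * (-(a₂ * a₃)) + t⁻¹ * (-(b₂ * b₃)), t⁻¹ * (-(b₂ * b₄));
           t * (-(a₁ * a₃)), t * (-(a₂ * a₃)) + t⁻¹ * (-(b₂ * b₃)),
             t * a₃ ^ 2 + t⁻¹ * b₃ ^ 2, t⁻¹ * (-(b₃ * b₄));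
           0, t⁻¹ * (-(b₂ * b₄)), t⁻¹ * (-(b₃ * b₄)), t⁻¹ * b₄ ^ 2] := by
      subst hA hB
      ext i j
      fin_cases i <;> fin_cases j <;> simp [Matrix.vecHead, Matrix.vecTail]
    rw [hM, det4aux]
    have ha1 : a₁ = -a₂ - a₃ := by linarith
    have hb4 : b₄ = -b₂ - b₃ := by linarith
    subst ha1 hb4
    field_simp
    ring
  refine ⟨key, ?_, ?_⟩
  · intro t ht hne
    rw [key t ht]
    have ht0 : t ≠ 0 := ne_of_gt ht
    have h1 : a₂ * a₃ * t + b₂ * b₃ / t ≠ 0 := by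
      intro h
      apply hne
      field_simp at h ⊢
      nlinarith [h]
    have h2 : (0:ℝ) < a₁ ^ 2 := by positivity
    have h3 : (0:ℝ) < b₄ ^ 2 := by positivity
    have h4 : (0:ℝ) < (a₂ * a₃ * t + b₂ * b₃ / t) ^ 2 := by positivity
    nlinarith [mul_pos (mul_pos h2 h3) h4]
  · set c := a₂ * a₃ with hc
    set d := b₂ * b₃ with hd
    have hc0 : c ≠ 0 := mul_ne_zero ha₂ ha₃
    have hd0 : d ≠ 0 := mul_ne_zero hb₂ hb₃
    have hK : -4 * a₁ ^ 2 * b₄ ^ 2 ≠ 0 :=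
      mul_ne_zero (mul_ne_zero (by norm_num) (pow_ne_zero 2 ha₁)) (pow_ne_zero 2 hb₄)
    by_cases h : (c * 1 + d / 1) ^ 2 = (c * 2 + d / 2) ^ 2
    · refine ⟨1, 3, one_pos, by norm_num, ?_⟩
      rw [key 1 one_pos, key 3 (by norm_num)]
      intro habs
      have h2 : (c * 1 + d / 1) ^ 2 = (c * 3 + d / 3) ^ 2 :=
        mul_left_cancel₀ hK habs
      have hd2 : d ^ 2 = 4 * c ^ 2 := by linear_combination (4/3) * h
      have hc2 : c ^ 2 = 0 := by linear_combination (-9/40) * h2 + (1/5) * hd2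
      exact hc0 (pow_eq_zero_iff two_ne_zero |>.mp hc2)
    · refine ⟨1, 2, one_pos, two_pos, ?_⟩
      rw [key 1 one_pos, key 2 two_pos]
      intro habs
      exact h (mul_left_cancel₀ hK habs)
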